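/- Let k be a division ring and V ⊆ k^n a two-sided vector subspace of dimension d. Then there is a k-bimodule automorphism of k^n taking V onto the standard coordinate subspace k^d spanned by e_1,...,e_d. -/

import Mathlib

open Finset in
/-- From a nonzero right-closed submodule of `k^n` one can extract a vector with
central entries, one of which equals `1` (minimal-support argument). -/
lemma extract_central_aux7 {k : Type*} [DivisionRing k] {n : ℕ}
    (W : Submodule k (Fin n → k))
    (hr : ∀ (a : k) (x : Fin n → k), x ∈ W → (fun i => x i * a) ∈ W)
    (hW : W ≠ ⊥) :
    ∃ v ∈ W, ∃ i0 : Fin n, v i0 = 1 ∧ ∀ i a, a * v i = v i * a := by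
  classical
  obtain ⟨x, hxW, hx0⟩ := (Submodule.ne_bot_iff W).mp hW
  set supp : (Fin n → k) → Finset (Fin n) := fun y => univ.filter (fun i => y i ≠ 0) with hsupp
  have hQ : ∃ m, ∃ y, y ∈ W ∧ y ≠ 0 ∧ (supp y).card = m := ⟨_, x, hxW, hx0, rfl⟩
  set m0 := Nat.find hQ with hm0
  obtain ⟨v₀, hv₀W, hv₀0, hv₀c⟩ := Nat.find_spec hQ
  have hmin : ∀ y, y ∈ W → y ≠ 0 → m0 ≤ (supp y).card := fun y h1 h2 =>
    Nat.find_min' hQ ⟨y, h1, h2, rfl⟩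
  obtain ⟨i0, hi0⟩ : ∃ i0, v₀ i0 ≠ 0 := Function.ne_iff.mp hv₀0
  set v : Fin n → k := (v₀ i0)⁻¹ • v₀ with hv
  have hvW : v ∈ W := W.smul_mem _ hv₀W
  have hvi0 : v i0 = 1 := by simp [hv, inv_mul_cancel₀ hi0]
  have hsuppv : supp v = supp v₀ := by
    ext i
    simp only [hsupp, mem_filter, mem_univ, true_and, hv, Pi.smul_apply, smul_eq_mul]
    constructor
    · intro h h'; exact h (by simp [h'])
    · intro h h'; exact h (by simpa [inv_eq_zero, hi0] using mul_eq_zero.mp h')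
  have hi0v : i0 ∈ supp v := by
    simp [hsupp, hvi0]
  refine ⟨v, hvW, i0, hvi0, fun i a => ?_⟩
  set w : Fin n → k := a • v - (fun i => v i * a) with hw
  have hwW : w ∈ W := W.sub_mem (W.smul_mem _ hvW) (hr a v hvW)
  have hw0 : w = 0 := by
    by_contra hne
    have h1 : m0 ≤ (supp w).card := hmin w hwW hne
    have h2 : supp w ⊆ (supp v).erase i0 := by
      intro i hi
      simp only [hsupp, mem_filter, mem_univ, true_and] at hi
      rw [mem_erase]
      constructor
      · rintro rfl
        exact hi (by simp [hw, hvi0])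
      · simp only [hsupp, mem_filter, mem_univ, true_and]
        intro h0
        exact hi (by simp [hw, h0])
    have h3 : (supp w).card ≤ (supp v).card - 1 := by
      calc (supp w).card ≤ ((supp v).erase i0).card := card_le_card h2
        _ = (supp v).card - 1 := card_erase_of_mem hi0v
    have h4 : 1 ≤ (supp v).card := card_pos.mpr ⟨i0, hi0v⟩
    have h5 : (supp v).card = m0 := by rw [hsuppv, hv₀c]
    omega
  have := congrFun hw0 i
  simp only [hw, Pi.sub_apply, Pi.smul_apply, smul_eq_mul, Pi.zero_apply, sub_eq_zero] at this
  exact this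

/-- A right-closed submodule of `k^n` of finrank `m` has a spanning, linearly
independent family of `m` vectors all of whose entries are central. -/
lemma central_basis_aux7 {k : Type*} [DivisionRing k] {n : ℕ} :
    ∀ (m : ℕ) (W : Submodule k (Fin n → k)),
    (∀ (a : k) (x : Fin n → k), x ∈ W → (fun i => x i * a) ∈ W) →
    Module.finrank k W = m →
    ∃ v : Fin m → (Fin n → k), (∀ j ∈ Set.range v, j ∈ W) ∧
      (∀ j i a, a * v j i = v j i * a) ∧
      LinearIndependent k v ∧ Submodule.span k (Set.range v) = W := by
  intro m
  induction m with
  | zero =>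
    intro W hr h0
    have hbot : W = ⊥ := Submodule.finrank_eq_zero.mp h0
    refine ⟨Fin.elim0, ?_, ?_, ?_, ?_⟩
    · simp
    · exact fun j => j.elim0
    · exact linearIndependent_empty_type
    · simp [Set.range_eq_empty, hbot]
  | succ m ih =>
    intro W hr hW
    have hWbot : W ≠ ⊥ := by
      intro h
      rw [h, finrank_bot] at hW
      omega
    classical
    obtain ⟨v0, hv0W, i0, hv0i0, hc⟩ := extract_central_aux7 W hr hWbot
    set π : (Fin n → k) →ₗ[k] k := LinearMap.proj i0 with hπ
    set W' : Submodule k (Fin n → k) := W ⊓ LinearMap.ker π with hW'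
    have hrW' : ∀ (a : k) (x : Fin n → k), x ∈ W' → (fun i => x i * a) ∈ W' := by
      intro a x hx
      obtain ⟨hx1, hx2⟩ := hx
      refine ⟨hr a x hx1, ?_⟩
      simp only [SetLike.mem_coe, LinearMap.mem_ker, hπ, LinearMap.proj_apply] at hx2 ⊢
      simp [hx2]
    set f : W →ₗ[k] k := π.comp W.subtype with hf
    have hfsurj : LinearMap.range f = ⊤ := by
      rw [LinearMap.range_eq_top]
      intro c
      exact ⟨c • ⟨v0, hv0W⟩, by simp [hf, hπ, hv0i0]⟩
    have hker : LinearMap.ker f = Submodule.comap W.subtype W' := by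
      ext x
      simp [hf, hW', x.2]
    have hkerW' : Module.finrank k (LinearMap.ker f) = Module.finrank k W' := by
      rw [hker]
      exact (Submodule.comapSubtypeEquivOfLe inf_le_left).finrank_eq
    have hfr : Module.finrank k W' = m := by
      have := LinearMap.finrank_range_add_finrank_ker f
      rw [hfsurj, finrank_top, hW, hkerW'] at this
      have h1 : Module.finrank k k = 1 := Module.finrank_self k
      omega
    obtain ⟨v', hv'W, hv'c, hv'li, hv'span⟩ := ih W' hrW' hfr
    refine ⟨Fin.cons v0 v', ?_, ?_, ?_, ?_⟩
    · rintro j ⟨l, rfl⟩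
      refine Fin.cases ?_ ?_ l
      · exact hv0W
      · intro l'
        simp only [Fin.cons_succ]
        exact (hv'W _ ⟨l', rfl⟩).1
    · intro j
      refine Fin.cases ?_ ?_ j
      · simpa using hc
      · intro l'
        simpa using hv'c l'
    · refine LinearIndependent.fin_cons hv'li ?_
      rw [hv'span]
      rintro ⟨-, h2⟩
      simp only [SetLike.mem_coe, LinearMap.mem_ker, hπ, LinearMap.proj_apply, hv0i0] at h2
      exact one_ne_zero h2
    · rw [Fin.range_cons]
      apply le_antisymm
      · rw [Submodule.span_le]
        rintro x (rfl | hx)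
        · exact hv0W
        · exact (hv'W _ hx).1
      · intro x hx
        have hx' : x - x i0 • v0 ∈ W' := by
          refine ⟨W.sub_mem hx (W.smul_mem _ hv0W), ?_⟩
          simp [hπ, hv0i0]
        have h1 : x i0 • v0 ∈ Submodule.span k (insert v0 (Set.range v')) :=
          Submodule.smul_mem _ _ (Submodule.subset_span (Set.mem_insert _ _))
        have h2 : x - x i0 • v0 ∈ Submodule.span k (insert v0 (Set.range v')) := by
          apply Submodule.span_mono (Set.subset_insert _ _)
          rw [hv'span]
          exact hx'
        have := Submodule.add_mem _ h1 h2
        simpa using this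

set_option maxHeartbeats 1600000 in
/-- Lemma 4 (class2sided): a two-sided vector subspace `V ⊆ k^n` of dimension `d` can
be taken to the standard coordinate subspace `k^d` by a `k`-bimodule automorphism. -/
theorem stmt_7 {k : Type*} [DivisionRing k] {n d : ℕ}
    (Vl : Submodule k (Fin n → k)) (Vr : Submodule kᵐᵒᵖ (Fin n → k))
    (hV : (Vl : Set (Fin n → k)) = (Vr : Set (Fin n → k)))
    (hd : Module.finrank k Vl = d) :
    ∃ g : (Fin n → k) ≃ₗ[k] (Fin n → k),
      (∀ (a : k) (x : Fin n → k), g (fun i => x i * a) = fun i => g x i * a) ∧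
      g '' (Vl : Set (Fin n → k)) = {x : Fin n → k | ∀ i : Fin n, d ≤ (i : ℕ) → x i = 0} := by
  classical
  -- right closure of Vl
  have hVr : ∀ (a : k) (x : Fin n → k), x ∈ Vl → (fun i => x i * a) ∈ Vl := by
    intro a x hx
    have h1 : x ∈ Vr := by
      rw [← SetLike.mem_coe, ← hV]
      exact hx
    have h2 : (MulOpposite.op a) • x ∈ Vr := Vr.smul_mem _ h1
    have h3 : (MulOpposite.op a) • x = fun i => x i * a := rfl
    rw [← h3, ← SetLike.mem_coe, hV]
    exact h2
  obtain ⟨v, hvW, hvc, hvli, hvspan⟩ := central_basis_aux7 d Vl hVr hd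
  have hdn : d ≤ n := by
    have h := Submodule.finrank_le Vl
    rw [hd, Module.finrank_fin_fun] at h
    exact h
  -- pass to the center
  set Z := Subring.center k with hZ
  set b' : Fin d → (Fin n → Z) :=
    fun j i => ⟨v j i, Subring.mem_center_iff.mpr (fun a => hvc j i a)⟩ with hb'
  have hb'li : LinearIndependent Z b' := by
    rw [Fintype.linearIndependent_iff]
    intro c hc j
    have hkli := Fintype.linearIndependent_iff.mp hvli (fun j => (c j : k))
    have h0 : ∑ j, (c j : k) • v j = 0 := by
      funext i
      have := congrFun hc i
      simp only [Finset.sum_apply, Pi.smul_apply, Pi.zero_apply, smul_eq_mul] at this ⊢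
      have h2 : ((∑ j, c j * b' j i : Z) : k) = 0 := by rw [this]; rfl
      push_cast at h2
      simpa [hb'] using h2
    exact Subtype.ext (by simpa using hkli h0 j)
  -- extend to a basis of Z^n indexed by Fin n, the first d vectors being b'
  set B0 := Module.Basis.sumExtend hb'li with hB0
  have : Finite (Fin d ⊕ ↑(Module.Basis.sumExtendIndex hb'li)) :=
    Module.Finite.finite_basis B0
  have : Finite ↑(Module.Basis.sumExtendIndex hb'li) :=
    Finite.of_injective
      (fun s => (Sum.inr s : Fin d ⊕ ↑(Module.Basis.sumExtendIndex hb'li))) Sum.inr_injective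
  have : Fintype ↑(Module.Basis.sumExtendIndex hb'li) := Fintype.ofFinite _
  have hcard : d + Fintype.card ↑(Module.Basis.sumExtendIndex hb'li) = n := by
    have h1 := Module.finrank_eq_card_basis B0
    rw [Module.finrank_fin_fun] at h1
    simp only [Fintype.card_sum, Fintype.card_fin] at h1
    omega
  set e : (Fin d ⊕ ↑(Module.Basis.sumExtendIndex hb'li)) ≃ Fin n :=
    (Equiv.sumCongr (Equiv.refl (Fin d)) (Fintype.equivFinOfCardEq rfl)).trans
      ((finSumFinEquiv).trans (finCongr hcard)) with he
  set B := B0.reindex e with hB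
  set idx : Fin d → Fin n := fun j => e (Sum.inl j) with hidx
  have hBinl : ∀ j : Fin d, B (idx j) = b' j := by
    intro j
    rw [hB, Module.Basis.reindex_apply, hidx, Equiv.symm_apply_apply]
    simp [hB0, Module.Basis.sumExtend, Equiv.Set.sumDiffSubset, Module.Basis.extend_apply_self,
      Equiv.Set.union, Equiv.Set.union', Equiv.sumCongr, Equiv.ofInjective]
    rfl
  have hval : ∀ j : Fin d, ((idx j : Fin n) : ℕ) = (j : ℕ) := by
    intro j
    simp [hidx, he, finSumFinEquiv]
  -- the change-of-basis matrix over the center and its inverse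
  set M : Matrix (Fin n) (Fin n) Z := (Pi.basisFun Z (Fin n)).toMatrix B with hM
  have hMinv : Invertible M := (Pi.basisFun Z (Fin n)).invertibleToMatrix B
  set N := ⅟M with hN
  have hMN : M * N = 1 := mul_invOf_self M
  have hNM : N * M = 1 := invOf_mul_self M
  have hMapp : ∀ i j, M i j = B j i := by
    intro i j
    simp [hM, Module.Basis.toMatrix_apply]
  set φ : Z →+* k := Subring.subtype Z with hφ
  set R : Matrix (Fin n) (Fin n) k := (M.transpose).map φ with hR
  set S : Matrix (Fin n) (Fin n) k := (N.transpose).map φ with hS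
  have hScen : ∀ i j a, a * S i j = S i j * a := by
    intro i j a
    have := (N.transpose i j).2
    rw [Subring.mem_center_iff] at this
    exact this a
  have hRS : R * S = 1 := by
    rw [hR, hS, ← Matrix.map_mul, ← Matrix.transpose_mul, hNM, Matrix.transpose_one,
      Matrix.map_one φ (map_zero φ) (map_one φ)]
  have hSR : S * R = 1 := by
    rw [hR, hS, ← Matrix.map_mul, ← Matrix.transpose_mul, hMN, Matrix.transpose_one,
      Matrix.map_one φ (map_zero φ) (map_one φ)]
  -- the bimodule automorphism
  set g : (Fin n → k) ≃ₗ[k] (Fin n → k) :=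
    { toFun := fun x => Matrix.vecMul x S
      invFun := fun x => Matrix.vecMul x R
      map_add' := fun x y => Matrix.add_vecMul S x y
      map_smul' := fun c x => by
        funext j
        simp [Matrix.vecMul, dotProduct, Finset.mul_sum, mul_assoc]
      left_inv := fun x => by
        show Matrix.vecMul (Matrix.vecMul x S) R = x
        rw [Matrix.vecMul_vecMul, hSR, Matrix.vecMul_one]
      right_inv := fun x => by
        show Matrix.vecMul (Matrix.vecMul x R) S = x
        rw [Matrix.vecMul_vecMul, hRS, Matrix.vecMul_one] } with hg
  have hgr : ∀ (a : k) (x : Fin n → k), g (fun i => x i * a) = fun i => g x i * a := by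
    intro a x
    funext j
    show Matrix.vecMul (fun i => x i * a) S j = Matrix.vecMul x S j * a
    simp only [Matrix.vecMul, dotProduct]
    rw [Finset.sum_mul]
    congr 1
    funext i
    rw [mul_assoc, hScen i j a, ← mul_assoc]
  have hrow : ∀ j : Fin n, g (fun l => (B j l : k)) = Pi.single j 1 := by
    intro j
    have hrowR : (fun l => (B j l : k)) = Matrix.vecMul (Pi.single j 1) R := by
      funext l
      simp [Matrix.vecMul, dotProduct, Pi.single_apply, hR, hMapp, hφ,
        Subring.coe_subtype]
    show Matrix.vecMul _ S = _
    rw [hrowR, Matrix.vecMul_vecMul, hRS, Matrix.vecMul_one]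
  have hgv : ∀ j : Fin d, g (v j) = Pi.single (idx j) 1 := by
    intro j
    have h1 : v j = fun l => (B (idx j) l : k) := by
      funext l
      rw [hBinl j]
    rw [h1, hrow]
  refine ⟨g, hgr, ?_⟩
  -- compute the image
  have himg : g '' (Vl : Set (Fin n → k)) =
      (Submodule.span k (Set.range fun j : Fin d => (Pi.single (idx j) (1 : k) : Fin n → k)) :
        Set (Fin n → k)) := by
    rw [← hvspan]
    have h1 : ⇑g = ⇑g.toLinearMap := rfl
    rw [h1, ← Submodule.map_coe, Submodule.map_span, ← Set.range_comp]
    have h2 : (⇑g.toLinearMap ∘ v) = fun j : Fin d => (Pi.single (idx j) (1 : k) : Fin n → k) := by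
      funext j
      exact hgv j
    rw [h2]
  rw [himg]
  apply Set.Subset.antisymm
  · intro x hx
    induction hx using Submodule.span_induction with
    | mem x hxx =>
      obtain ⟨j, rfl⟩ := hxx
      intro i hi
      have hne : i ≠ idx j := by
        intro hh
        rw [hh, hval j] at hi
        omega
      simp [Pi.single_apply, hne]
    | zero => intro i _; rfl
    | add x y _ _ hx hy =>
      intro i hi
      simp [Pi.add_apply, hx i hi, hy i hi]
    | smul c x _ hx =>
      intro i hi
      simp [Pi.smul_apply, hx i hi]
  · intro x hx
    simp only [Set.mem_setOf_eq] at hx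
    have hxeq : x = ∑ j : Fin d, x (idx j) • (Pi.single (idx j) (1 : k) : Fin n → k) := by
      funext i
      rw [Finset.sum_apply]
      by_cases h : (i : ℕ) < d
      · set j0 : Fin d := ⟨(i : ℕ), h⟩ with hj0
        have hij0 : idx j0 = i := by
          apply Fin.ext
          rw [hval j0]
        rw [Finset.sum_eq_single j0]
        · rw [hij0]; simp
        · intro j _ hj
          have hne : i ≠ idx j := by
            intro hh
            apply hj
            apply Fin.ext
            have h2 := hval j
            rw [← hh] at h2
            simp [hj0, h2]
          simp [Pi.single_apply, hne]
        · intro h'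
          exact absurd (Finset.mem_univ _) h'
      · have hx0 : x i = 0 := hx i (le_of_not_gt h)
        rw [hx0]
        symm
        apply Finset.sum_eq_zero
        intro j _
        have hne : i ≠ idx j := by
          intro hh
          rw [hh, hval j] at h
          exact h j.2
        simp [Pi.single_apply, hne]
    rw [hxeq]
    exact SetLike.mem_coe.mpr (Submodule.sum_mem _ (fun j _ =>
      Submodule.smul_mem _ _ (Submodule.subset_span ⟨j, rfl⟩)))
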